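/- Let G be a finite graph and H, K disjoint nonempty subgraphs of G (disjoint vertex sets and edge sets). Then in the Hall algebra of X^G, 1_H * 1_K = Σ_J 1_J, where J ranges over subgraphs of G containing H ⊔ K such that V(J) = V(H) ∪ V(K) and every edge of J not in H ⊔ K joins a vertex of H to a vertex of K. If H and K are not disjoint, then 1_H * 1_K = 0. -/
import Mathlib



section GraphCore

variable {V : Type}

theorem telescope_iUnion {m : ℕ} (M : Fin (m + 1) → Set V) (hM : Antitone M) :
    (⋃ j : Fin m, (M j.castSucc \ M j.succ)) = M 0 \ M (Fin.last m) := by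
  ext x
  simp only [Set.mem_iUnion, Set.mem_diff]
  constructor
  · rintro ⟨j, hj1, hj2⟩
    refine ⟨hM (Fin.zero_le _) hj1, fun hx => hj2 (hM (Fin.le_last _) hx)⟩
  · rintro ⟨h0, hlast⟩
    by_contra hno
    push_neg at hno
    have hall : ∀ j : Fin (m + 1), x ∈ M j := by
      intro j
      induction j using Fin.induction with
      | zero => exact h0
      | succ j ih => exact (hno j ih)
    exact hlast (hall _)

theorem disjoint_layers {m : ℕ} (M : Fin (m + 1) → Set V) (hM : Antitone M) :
    ∀ i j : Fin m, i ≠ j →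
      Disjoint (M i.castSucc \ M i.succ) (M j.castSucc \ M j.succ) := by
  have key : ∀ i j : Fin m, i < j →
      Disjoint (M i.castSucc \ M i.succ) (M j.castSucc \ M j.succ) := by
    intro i j hij
    rw [Set.disjoint_left]
    rintro x ⟨_, hxi⟩ ⟨hxj, _⟩
    have : M j.castSucc ⊆ M i.succ := hM (by
      rw [Fin.succ_le_castSucc_iff]; exact hij)
    exact hxi (this hxj)
  intro i j hij
  rcases lt_or_gt_of_ne hij with h | h
  · exact key i j h
  · exact (key j i h).symm

/-- An `n`-simplex of the 2-Segal set `X^G` of a graph `G`: a subgraph `H`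
together with an ordered partition of its vertices into `n` possibly empty
parts. -/
@[ext]
structure GSimplex {V : Type} (G : SimpleGraph V) (n : ℕ) where
  H : G.Subgraph
  S : Fin n → Set V
  cover : (⋃ i, S i) = H.verts
  disj : ∀ i j : Fin n, i ≠ j → Disjoint (S i) (S j)

namespace GSimplex

variable {G : SimpleGraph V}

/-- The chain of "remaining" vertex sets of a partitioned subgraph:
`chain σ j` is the union of the parts with index `≥ j`. -/
def chain {n : ℕ} (σ : GSimplex G n) (j : Fin (n + 1)) : Set V :=
  ⋃ k : Fin n, if j ≤ k.castSucc then σ.S k else ∅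

theorem chain_antitone {n : ℕ} (σ : GSimplex G n) : Antitone σ.chain := by
  intro j j' hjj'
  refine Set.iUnion_subset fun k => ?_
  by_cases h : j' ≤ k.castSucc
  · simp only [h, if_pos]
    exact Set.subset_iUnion_of_subset k (by simp [hjj'.trans h])
  · simp [h]

theorem chain_zero {n : ℕ} (σ : GSimplex G n) : σ.chain 0 = σ.H.verts := by
  rw [← σ.cover]
  unfold chain

  ext k
  simp [Fin.zero_le]

theorem chain_last {n : ℕ} (σ : GSimplex G n) : σ.chain (Fin.last n) = ∅ := by
  unfold chain
  ext x
  simp only [Set.mem_iUnion, Set.mem_empty_iff_false, iff_false]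
  rintro ⟨k, hk⟩
  rw [if_neg] at hk
  · exact hk
  · exact not_le.mpr (Fin.castSucc_lt_last k)

/-- The action of a simplicial operator `α : [m] → [n]` on `X^G`:
the parts are merged or deleted according to `α`, and the subgraph is replaced
by its restriction (spanned subgraph) to the remaining vertices. -/
def act {m n : ℕ} (α : Fin (m + 1) → Fin (n + 1)) (hα : Monotone α)
    (σ : GSimplex G n) : GSimplex G m where
  H := σ.H.induce (σ.chain (α 0) \ σ.chain (α (Fin.last m)))
  S j := σ.chain (α j.castSucc) \ σ.chain (α j.succ)
  cover := by
    have := telescope_iUnion (fun j => σ.chain (α j)) (σ.chain_antitone.comp_monotone hα)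
    simpa using this
  disj := disjoint_layers (fun j => σ.chain (α j)) (σ.chain_antitone.comp_monotone hα)

/-- The `i`-th face map `X^G_{n+1} → X^G_n`. -/
def face {n : ℕ} (i : Fin (n + 2)) : GSimplex G (n + 1) → GSimplex G n :=
  act i.succAbove (Fin.strictMono_succAbove i).monotone

/-- The `i`-th degeneracy map `X^G_n → X^G_{n+1}`. -/
def degen {n : ℕ} (i : Fin (n + 1)) : GSimplex G n → GSimplex G (n + 1) :=
  act i.predAbove (Fin.predAbove_right_monotone i)

/-- The element of `X^G_1` corresponding to a subgraph `H` of `G`. -/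
def ofSubgraph (H : G.Subgraph) : GSimplex G 1 where
  H := H
  S := fun _ => H.verts
  cover := Set.iUnion_const _
  disj := fun i j hij => absurd (Subsingleton.elim i j) hij

end GSimplex

end GraphCore


section HallAux

open GSimplex

variable {V : Type} {G : SimpleGraph V}

lemma chain_one (c : GSimplex G 2) : c.chain 1 = c.S 1 := by
  unfold GSimplex.chain
  ext x
  simp only [Set.mem_iUnion, Fin.exists_fin_two]
  constructor
  · rintro (h | h)
    · rw [if_neg (by decide)] at h; exact absurd h (Set.notMem_empty x)
    · rwa [if_pos (by decide)] at h
  · intro h; exact Or.inr (by rwa [if_pos (by decide)])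

lemma chain_two (c : GSimplex G 2) : c.chain 2 = ∅ := by
  have := c.chain_last
  simpa using this

lemma chain_zero' (c : GSimplex G 2) : c.chain 0 = c.S 0 ∪ c.S 1 := by
  rw [c.chain_zero, ← c.cover]
  ext x
  simp [Set.mem_iUnion, Fin.exists_fin_two, Set.mem_union]

lemma face0_eq (c : GSimplex G 2) :
    GSimplex.face 0 c = GSimplex.ofSubgraph (c.H.induce (c.S 1)) := by
  have hset : c.chain ((0 : Fin 3).succAbove 0) \ c.chain ((0 : Fin 3).succAbove (Fin.last 1))
      = c.S 1 := by
    rw [show (0 : Fin 3).succAbove 0 = 1 by decide,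
        show (0 : Fin 3).succAbove (Fin.last 1) = 2 by decide, chain_one, chain_two]
    simp
  refine GSimplex.ext ?_ ?_
  · show c.H.induce _ = _
    rw [hset]
    rfl
  · funext j
    have hj : j = 0 := Subsingleton.elim _ _
    subst hj
    show c.chain ((0 : Fin 3).succAbove (Fin.castSucc 0)) \
        c.chain ((0 : Fin 3).succAbove (Fin.succ 0)) = _
    rw [show Fin.castSucc (0 : Fin 1) = 0 by decide, show Fin.succ (0 : Fin 1) = Fin.last 1 by decide]
    rw [hset]
    rfl

lemma face2_eq (c : GSimplex G 2) :
    GSimplex.face 2 c = GSimplex.ofSubgraph (c.H.induce (c.S 0)) := by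
  have hset : c.chain ((2 : Fin 3).succAbove 0) \ c.chain ((2 : Fin 3).succAbove (Fin.last 1))
      = c.S 0 := by
    rw [show (2 : Fin 3).succAbove 0 = 0 by decide,
        show (2 : Fin 3).succAbove (Fin.last 1) = 1 by decide, chain_zero', chain_one]
    exact Set.union_diff_cancel_right ((c.disj 0 1 (by decide)).inter_eq.le)
  refine GSimplex.ext ?_ ?_
  · show c.H.induce _ = _
    rw [hset]
    rfl
  · funext j
    have hj : j = 0 := Subsingleton.elim _ _
    subst hj
    show c.chain ((2 : Fin 3).succAbove (Fin.castSucc 0)) \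
        c.chain ((2 : Fin 3).succAbove (Fin.succ 0)) = _
    rw [show Fin.castSucc (0 : Fin 1) = 0 by decide, show Fin.succ (0 : Fin 1) = Fin.last 1 by decide]
    rw [hset]
    rfl

lemma face1_eq (c : GSimplex G 2) :
    GSimplex.face 1 c = GSimplex.ofSubgraph c.H := by
  have hset : c.chain ((1 : Fin 3).succAbove 0) \ c.chain ((1 : Fin 3).succAbove (Fin.last 1))
      = c.H.verts := by
    rw [show (1 : Fin 3).succAbove 0 = 0 by decide,
        show (1 : Fin 3).succAbove (Fin.last 1) = 2 by decide, c.chain_zero, chain_two]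
    simp
  refine GSimplex.ext ?_ ?_
  · show c.H.induce _ = _
    rw [hset, SimpleGraph.Subgraph.induce_self_verts]
    rfl
  · funext j
    have hj : j = 0 := Subsingleton.elim _ _
    subst hj
    show c.chain ((1 : Fin 3).succAbove (Fin.castSucc 0)) \
        c.chain ((1 : Fin 3).succAbove (Fin.succ 0)) = _
    rw [show Fin.castSucc (0 : Fin 1) = 0 by decide, show Fin.succ (0 : Fin 1) = Fin.last 1 by decide]
    rw [hset]
    rfl

lemma ofSubgraph_injective : Function.Injective (GSimplex.ofSubgraph (G := G)) :=
  fun _ _ h => congrArg GSimplex.H h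

lemma faces_char (H K J : G.Subgraph) (c : GSimplex G 2) :
    (GSimplex.face 0 c = GSimplex.ofSubgraph H ∧
     GSimplex.face 2 c = GSimplex.ofSubgraph K ∧
     GSimplex.face 1 c = GSimplex.ofSubgraph J) ↔
    (c.H = J ∧ c.S 0 = K.verts ∧ c.S 1 = H.verts ∧
     J.induce H.verts = H ∧ J.induce K.verts = K) := by
  rw [face0_eq, face1_eq, face2_eq]
  constructor
  · rintro ⟨h0, h2, h1⟩
    have e0 := ofSubgraph_injective h0
    have e2 := ofSubgraph_injective h2
    have e1 := ofSubgraph_injective h1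
    have hS1 : c.S 1 = H.verts := by rw [← e0]; rfl
    have hS0 : c.S 0 = K.verts := by rw [← e2]; rfl
    refine ⟨e1, hS0, hS1, ?_, ?_⟩
    · rw [← e1, ← hS1]; exact e0
    · rw [← e1, ← hS0]; exact e2
  · rintro ⟨e1, hS0, hS1, hiH, hiK⟩
    subst e1
    rw [hS0, hS1, hiH, hiK]
    exact ⟨rfl, rfl, rfl⟩

lemma verts_union (c : GSimplex G 2) : c.H.verts = c.S 0 ∪ c.S 1 := by
  rw [← c.cover]
  ext x
  simp [Set.mem_iUnion, Fin.exists_fin_two]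

end HallAux

open scoped Classical in
/-- Let `G` be a finite graph and `H, K` disjoint nonempty
subgraphs.  Then in the Hall algebra of `X^G` we have `1_H * 1_K = Σ_J 1_J`,
where `J` ranges over subgraphs of `G` containing `H ⊔ K` with
`V(J) = V(H) ∪ V(K)` and with every edge of `J` not in `H ⊔ K` joining a
vertex of `H` to a vertex of `K`.  If `H` and `K` are not disjoint then
`1_H * 1_K = 0`. -/
theorem hall_graph_product {V : Type} [Fintype V] (G : SimpleGraph V) :
    (∀ H K : G.Subgraph, Disjoint H.verts K.verts →
      H.verts.Nonempty → K.verts.Nonempty →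
      ∀ J : G.Subgraph,
        Nat.card {c : GSimplex G 2 //
            GSimplex.face 0 c = GSimplex.ofSubgraph H ∧
            GSimplex.face 2 c = GSimplex.ofSubgraph K ∧
            GSimplex.face 1 c = GSimplex.ofSubgraph J} =
          if H ⊔ K ≤ J ∧ J.verts = H.verts ∪ K.verts ∧
              (∀ a b : V, J.Adj a b → ¬ H.Adj a b → ¬ K.Adj a b →
                (a ∈ H.verts ∧ b ∈ K.verts) ∨ (a ∈ K.verts ∧ b ∈ H.verts))
            then 1 else 0) ∧
    (∀ H K : G.Subgraph, ¬ Disjoint H.verts K.verts →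
      ∀ b'' : GSimplex G 1,
        Nat.card {c : GSimplex G 2 //
            GSimplex.face 0 c = GSimplex.ofSubgraph H ∧
            GSimplex.face 2 c = GSimplex.ofSubgraph K ∧
            GSimplex.face 1 c = b''} = 0) := by

  constructor
  · intro H K hdisj _ _ J
    by_cases hP : H ⊔ K ≤ J ∧ J.verts = H.verts ∪ K.verts ∧
        (∀ a b : V, J.Adj a b → ¬ H.Adj a b → ¬ K.Adj a b →
          (a ∈ H.verts ∧ b ∈ K.verts) ∨ (a ∈ K.verts ∧ b ∈ H.verts))
    · rw [if_pos hP]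
      obtain ⟨hle, hverts, hcross⟩ := hP
      have hHJ : H ≤ J := le_trans le_sup_left hle
      have hKJ : K ≤ J := le_trans le_sup_right hle
      have hiH : J.induce H.verts = H := by
        ext a b
        · simp
        · simp only [SimpleGraph.Subgraph.induce_adj]
          constructor
          · rintro ⟨ha, hb, hab⟩
            by_contra hH
            by_cases hK : K.Adj a b
            · exact (Set.disjoint_left.mp hdisj ha) hK.fst_mem
            · rcases hcross a b hab hH hK with ⟨_, hbK⟩ | ⟨haK, _⟩
              · exact (Set.disjoint_left.mp hdisj hb) hbK
              · exact (Set.disjoint_left.mp hdisj ha) haK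
          · intro h
            exact ⟨h.fst_mem, h.snd_mem, hHJ.2 h⟩
      have hiK : J.induce K.verts = K := by
        ext a b
        · simp
        · simp only [SimpleGraph.Subgraph.induce_adj]
          constructor
          · rintro ⟨ha, hb, hab⟩
            by_contra hK
            by_cases hH : H.Adj a b
            · exact (Set.disjoint_right.mp hdisj ha) hH.fst_mem
            · rcases hcross a b hab hH hK with ⟨haH, _⟩ | ⟨_, hbH⟩
              · exact (Set.disjoint_right.mp hdisj ha) haH
              · exact (Set.disjoint_right.mp hdisj hb) hbH
          · intro h
            exact ⟨h.fst_mem, h.snd_mem, hKJ.2 h⟩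
      obtain ⟨c0, hc0H, hc0S0, hc0S1⟩ :
          ∃ c0 : GSimplex G 2, c0.H = J ∧ c0.S 0 = K.verts ∧ c0.S 1 = H.verts := by
        refine ⟨⟨J, ![K.verts, H.verts], ?_, ?_⟩, rfl, by simp, by simp⟩
        · ext x
          simp [Set.mem_iUnion, Fin.exists_fin_two, hverts, or_comm]
        · intro i j hij
          fin_cases i <;> fin_cases j
          · exact absurd rfl hij
          · simpa using hdisj.symm
          · simpa using hdisj
          · exact absurd rfl hij
      rw [Nat.card_eq_one_iff_unique]
      constructor
      · constructor
        rintro ⟨c, hc⟩ ⟨c', hc'⟩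
        obtain ⟨e1, hS0, hS1, -, -⟩ := (faces_char H K J c).mp hc
        obtain ⟨e1', hS0', hS1', -, -⟩ := (faces_char H K J c').mp hc'
        apply Subtype.ext
        refine GSimplex.ext (e1.trans e1'.symm) ?_
        funext i
        fin_cases i
        · exact hS0.trans hS0'.symm
        · exact hS1.trans hS1'.symm
      · exact ⟨⟨c0, (faces_char H K J c0).mpr ⟨hc0H, hc0S0, hc0S1, hiH, hiK⟩⟩⟩
    · rw [if_neg hP]
      haveI : IsEmpty {c : GSimplex G 2 //
          GSimplex.face 0 c = GSimplex.ofSubgraph H ∧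
          GSimplex.face 2 c = GSimplex.ofSubgraph K ∧
          GSimplex.face 1 c = GSimplex.ofSubgraph J} := by
        refine ⟨fun ⟨c, hc⟩ => ?_⟩
        obtain ⟨e1, hS0, hS1, hiH, hiK⟩ := (faces_char H K J c).mp hc
        have hverts : J.verts = H.verts ∪ K.verts := by
          rw [← e1, verts_union c, hS0, hS1, Set.union_comm]
        have hHJ : H ≤ J := by
          constructor
          · rw [hverts]; exact Set.subset_union_left
          · intro a b hab
            rw [← hiH] at hab
            exact hab.2.2
        have hKJ : K ≤ J := by
          constructor
          · rw [hverts]; exact Set.subset_union_right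
          · intro a b hab
            rw [← hiK] at hab
            exact hab.2.2
        refine hP ⟨sup_le hHJ hKJ, hverts, ?_⟩
        intro a b hab hH hK
        have ha : a ∈ H.verts ∪ K.verts := by rw [← hverts]; exact hab.fst_mem
        have hb : b ∈ H.verts ∪ K.verts := by rw [← hverts]; exact hab.snd_mem
        rcases ha with ha | ha <;> rcases hb with hb | hb
        · exact absurd (hiH ▸ (show (J.induce H.verts).Adj a b from ⟨ha, hb, hab⟩)) hH
        · exact Or.inl ⟨ha, hb⟩
        · exact Or.inr ⟨ha, hb⟩
        · exact absurd (hiK ▸ (show (J.induce K.verts).Adj a b from ⟨ha, hb, hab⟩)) hK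
      exact Nat.card_of_isEmpty
  · intro H K hdisj b''
    haveI : IsEmpty {c : GSimplex G 2 //
        GSimplex.face 0 c = GSimplex.ofSubgraph H ∧
        GSimplex.face 2 c = GSimplex.ofSubgraph K ∧
        GSimplex.face 1 c = b''} := by
      refine ⟨fun ⟨c, h0, h2, _⟩ => ?_⟩
      rw [face0_eq c] at h0
      rw [face2_eq c] at h2
      have e0 := ofSubgraph_injective h0
      have e2 := ofSubgraph_injective h2
      have hS1 : c.S 1 = H.verts := by rw [← e0]; rfl
      have hS0 : c.S 0 = K.verts := by rw [← e2]; rfl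
      exact hdisj (by rw [← hS1, ← hS0]; exact (c.disj 0 1 (by decide)).symm)
    exact Nat.card_of_isEmpty
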